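/- Let S be an inverse semigroup. The functor Q from the category of unitary right S-sets to PSh(C(S)), defined by Q(X)(e) = Xe = {x ∈ X : xe = x} and, for a morphism (e,s,f) of C(S), Q(X)(e,s,f) : Xe → Xf, x ↦ xs, is an equivalence of categories; in particular the category of unitary right S-sets is equivalent to the category of presheaves on the Cauchy completion C(S). -/

import Mathlib

universe u

open CategoryTheory

/-- An inverse semigroup: every element has a unique (von Neumann) inverse,
selected by `star`. -/
class InverseSemigroup (S : Type u) extends Semigroup S where
  star : S → S
  mul_star_mul : ∀ s : S, s * star s * s = s
  star_mul_star : ∀ s : S, star s * s * star s = star s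
  star_unique : ∀ s t : S, s * t * s = s → t * s * t = t → t = star s

namespace InverseSemigroup

variable {S : Type u} [InverseSemigroup S]

theorem star_star (s : S) : star (star s) = s :=
  (star_unique (star s) s (star_mul_star s) (mul_star_mul s)).symm

theorem star_idem {e : S} (he : e * e = e) : star e = e :=
  (star_unique e e (by rw [he, he]) (by rw [he, he])).symm

theorem mul_idem {e f : S} (he : e * e = e) (hf : f * f = f) :
    (e * f) * (e * f) = e * f := by
  set x := star (e * f) with hx
  have hxfix : (e * f) * x * (e * f) = e * f := mul_star_mul (e * f)
  have hxfix' : x * (e * f) * x = x := star_mul_star (e * f)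
  have he1 : ∀ y : S, e * (e * y) = e * y := fun y => by rw [← mul_assoc, he]
  have hf1 : ∀ y : S, f * (f * y) = f * y := fun y => by rw [← mul_assoc, hf]
  have A : e * (f * (x * (e * f))) = e * f := by
    simpa only [mul_assoc] using hxfix
  have B1 : ∀ y : S, x * (e * (f * (x * y))) = x * y := fun y => by
    have h := congrArg (· * y) hxfix'
    simpa only [mul_assoc] using h
  have h1 : (e * f) * (f * x * e) * (e * f) = e * f := by
    simp only [mul_assoc, hf1, he1]
    exact A
  have h2 : (f * x * e) * (e * f) * (f * x * e) = f * x * e := by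
    simp only [mul_assoc, he1, hf1, B1]
  have hC : f * x * e = x := by
    have := star_unique (e * f) (f * x * e) h1 h2
    rwa [← hx] at this
  have hCn : f * (x * e) = x := by simpa only [mul_assoc] using hC
  have key : (f * (x * e)) * (f * (x * e)) = f * (x * e) := by
    simp only [mul_assoc, B1]
  have hD : x * x = x := by rw [← hCn]; exact key
  have hE : e * f = x := (star_unique x (e * f) hxfix' hxfix).trans (star_idem hD)
  rw [hE]; exact hD

theorem idem_comm {e f : S} (he : e * e = e) (hf : f * f = f) :
    e * f = f * e := by
  have hef : (e * f) * (e * f) = e * f := mul_idem he hf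
  have hfe : (f * e) * (f * e) = f * e := mul_idem hf he
  have he1 : ∀ y : S, e * (e * y) = e * y := fun y => by rw [← mul_assoc, he]
  have hf1 : ∀ y : S, f * (f * y) = f * y := fun y => by rw [← mul_assoc, hf]
  have hefn : e * (f * (e * f)) = e * f := by simpa only [mul_assoc] using hef
  have hfen : f * (e * (f * e)) = f * e := by simpa only [mul_assoc] using hfe
  have h1 : (e * f) * (f * e) * (e * f) = e * f := by
    simp only [mul_assoc, hf1, he1]
    exact hefn
  have h2 : (f * e) * (e * f) * (f * e) = f * e := by
    simp only [mul_assoc, he1, hf1]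
    exact hfen
  have := star_unique (e * f) (f * e) h1 h2
  rw [this, star_idem hef]

theorem star_mul (a b : S) : star (a * b) = star b * star a := by
  set u := star a with hu
  set v := star b with hv
  have han : a * (u * a) = a := by simpa only [mul_assoc] using mul_star_mul a
  have hun : u * (a * u) = u := by simpa only [mul_assoc] using star_mul_star a
  have hbn : b * (v * b) = b := by simpa only [mul_assoc] using mul_star_mul b
  have hvn : v * (b * v) = v := by simpa only [mul_assoc] using star_mul_star b
  have ha1 : ∀ y : S, a * (u * (a * y)) = a * y := fun y => by
    have h := congrArg (· * y) (mul_star_mul a); simpa only [mul_assoc] using h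
  have hv1 : ∀ y : S, v * (b * (v * y)) = v * y := fun y => by
    have h := congrArg (· * y) (star_mul_star b); simpa only [mul_assoc] using h
  have hua : (u * a) * (u * a) = u * a := by
    simp only [mul_assoc]; rw [han]
  have hbv : (b * v) * (b * v) = b * v := by
    simp only [mul_assoc]; rw [hvn]
  have hc : (b * v) * (u * a) = (u * a) * (b * v) := idem_comm hbv hua
  have hc1 : ∀ y : S, b * (v * (u * (a * y))) = u * (a * (b * (v * y))) := fun y => by
    have h := congrArg (· * y) hc; simpa only [mul_assoc] using h
  have goal1 : (a * b) * (v * u) * (a * b) = a * b := by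
    simp only [mul_assoc]
    rw [hc1, ha1, hbn]
  have goal2 : (v * u) * (a * b) * (v * u) = v * u := by
    simp only [mul_assoc]
    rw [← hc1, hv1, hun]
  exact ((star_unique (a * b) (v * u) goal1 goal2)).symm

theorem star_mul_self_idem (s : S) : (star s * s) * (star s * s) = star s * s := by
  have h := congrArg (star s * ·) (mul_star_mul s)
  simpa only [mul_assoc] using h

theorem mul_star_self_idem (s : S) : (s * star s) * (s * star s) = s * star s := by
  have h := congrArg (· * star s) (mul_star_mul s)
  simpa only [mul_assoc] using h

end InverseSemigroup

open InverseSemigroup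

/-- A right `S`-set: a set with an associative right action of the semigroup `S`. -/
structure RSet (S : Type u) [Semigroup S] : Type (u + 1) where
  carrier : Type u
  act : carrier → S → carrier
  act_mul : ∀ (x : carrier) (s t : S), act (act x s) t = act x (s * t)

namespace RSet

variable {S : Type u} [Semigroup S]

/-- `S`-equivariant maps between right `S`-sets. -/
@[ext]
structure Hom (X Y : RSet S) where
  toFun : X.carrier → Y.carrier
  map_act : ∀ (x : X.carrier) (s : S), toFun (X.act x s) = Y.act (toFun x) s

/-- A right `S`-set is unitary if every element is of the form `y • s`. -/
def Unitary (X : RSet S) : Prop := ∀ x : X.carrier, ∃ (y : X.carrier) (s : S), X.act y s = x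

instance homCategory {P : RSet S → Prop} : Category.{u} {X : RSet S // P X} where
  Hom X Y := RSet.Hom X.1 Y.1
  id X := ⟨fun x => x, fun _ _ => rfl⟩
  comp f g := ⟨fun x => g.toFun (f.toFun x), fun x s => by
    simp [f.map_act, g.map_act]⟩

end RSet

/-- The category of unitary right `S`-sets, with `S`-equivariant maps. -/
abbrev USet (S : Type u) [Semigroup S] := {X : RSet S // X.Unitary}

theorem idem_left_absorb {S : Type u} [Semigroup S] {e f s : S}
    (he : e * e = e) (h : e * s * f = s) : e * s = s := by
  conv_lhs => rw [← h]
  rw [← mul_assoc, ← mul_assoc, he]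
  exact h

theorem idem_right_absorb {S : Type u} [Semigroup S] {e f s : S}
    (hf : f * f = f) (h : e * s * f = s) : s * f = s := by
  conv_lhs => rw [← h]
  rw [mul_assoc, hf]
  exact h

/-- The Cauchy completion `C(S)` of a semigroup `S`: objects are the idempotents,
and a morphism `f ⟶ e` is an element `s` with `e * s * f = s`; composition is
multiplication. -/
def CauchyCat (S : Type u) [Semigroup S] : Type u := {e : S // e * e = e}

namespace CauchyCat

variable {S : Type u} [Semigroup S]

instance : Category.{u} (CauchyCat S) where
  Hom f e := {s : S // e.1 * s * f.1 = s}
  id e := ⟨e.1, by rw [e.2, e.2]⟩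
  comp := fun {f g e} u v => ⟨v.1 * u.1, by
    rw [← mul_assoc, idem_left_absorb e.2 v.2, mul_assoc, idem_right_absorb f.2 u.2]⟩
  id_comp := fun {f e} u => Subtype.ext (idem_right_absorb f.2 u.2)
  comp_id := fun {f e} u => Subtype.ext (idem_left_absorb e.2 u.2)
  assoc := fun u v w => Subtype.ext (mul_assoc w.1 v.1 u.1).symm

end CauchyCat

variable (S : Type u) [InverseSemigroup S]

/-- The presheaf on `C(S)` associated with a right `S`-set `X`:
`e ↦ Xe = {x : x • e = x}`, with transition maps given by the action. -/
@[simps]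
def RSet.presheaf (X : RSet S) : (CauchyCat S)ᵒᵖ ⥤ Type u where
  obj e := {x : X.carrier // X.act x e.unop.1 = x}
  map {e f} s := TypeCat.ofHom fun x =>
    ⟨X.act x.1 s.unop.1, by rw [X.act_mul, idem_right_absorb f.unop.2 s.unop.2]⟩
  map_id e := by
    ext x
    exact x.2
  map_comp {a b c} g h := by
    ext x
    exact (X.act_mul x.1 g.unop.1 h.unop.1).symm

/-- The functor `Q` from unitary right `S`-sets to presheaves on the Cauchy
completion `C(S)`: `Q(X)(e) = Xe` and `Q(X)(e,s,f)(x) = x • s`. -/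
@[simps]
def QFunctor : USet S ⥤ ((CauchyCat S)ᵒᵖ ⥤ Type u) where
  obj X := X.1.presheaf S
  map {X Y} f :=
    { app := fun e => TypeCat.ofHom fun x => ⟨f.toFun x.1, by rw [← f.map_act, x.2]⟩
      naturality := fun e f' s => by
        ext x
        exact Subtype.ext (‹RSet.Hom X.1 Y.1›.map_act x.1 s.unop.1) }
  map_id X := by
    apply NatTrans.ext
    funext e
    ext x
    rfl
  map_comp f g := by
    apply NatTrans.ext
    funext e
    ext x
    rfl

/-! ### Auxiliary development for the proof -/

namespace QEquivAux

open InverseSemigroup Opposite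

variable {T : Type u} [InverseSemigroup T]

theorem mul_star_self (a : T) : a * (star a * a) = a := by
  rw [← mul_assoc]; exact mul_star_mul a

theorem idem_mul_left (e : CauchyCat T) (s : T) : e.1 * (e.1 * s) = e.1 * s := by
  rw [← mul_assoc, e.2]

/-- The idempotent `(f s)* (f s)` fixing `x • s` for `x ∈ X f`. -/
def tgt (f : CauchyCat T) (s : T) : CauchyCat T :=
  ⟨star (f.1 * s) * (f.1 * s), star_mul_self_idem _⟩

theorem tgt_cond (f : CauchyCat T) (s : T) :
    f.1 * (f.1 * s) * (tgt f s).1 = f.1 * s := by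
  rw [idem_mul_left]
  show f.1 * s * (star (f.1 * s) * (f.1 * s)) = f.1 * s
  exact mul_star_self _

theorem star_conj (a t : T) :
    star ((star a * a) * t) * ((star a * a) * t) = star (a * t) * (a * t) := by
  have h1 : star ((star a * a) * t) = star t * (star a * a) := by
    rw [InverseSemigroup.star_mul, star_idem (star_mul_self_idem a)]
  have hi : ∀ y : T, star a * (a * (star a * (a * y))) = star a * (a * y) := fun y => by
    have h := congrArg (· * y) (star_mul_self_idem a)
    simpa only [mul_assoc] using h
  rw [h1, InverseSemigroup.star_mul]
  simp only [mul_assoc]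
  rw [hi]

theorem tgt_tgt (f : CauchyCat T) (s t : T) :
    (tgt (tgt f s) t).1 = (tgt f (s * t)).1 := by
  show star ((star (f.1 * s) * (f.1 * s)) * t) * ((star (f.1 * s) * (f.1 * s)) * t)
      = star (f.1 * (s * t)) * (f.1 * (s * t))
  rw [show f.1 * (s * t) = (f.1 * s) * t from (mul_assoc _ _ _).symm]
  exact star_conj (f.1 * s) t

theorem act_tgt {c f : T} (hcf : c * f = c) (s : T) :
    (c * s) * (star (f * s) * (f * s)) = c * s := by
  have hb : c * s = c * (f * s) := by rw [← mul_assoc, hcf]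
  rw [hb, mul_assoc, mul_star_self]

theorem conj_le {c f : T} (hc : c * c = c) (hcf : c * f = c) (s : T) :
    (star (c * s) * (c * s)) * (star (f * s) * (f * s)) = star (c * s) * (c * s) := by
  have hb : c * s = c * (f * s) := by rw [← mul_assoc, hcf]
  have key : star (c * s) * (c * s) = star (f * s) * (c * (f * s)) := by
    rw [hb, InverseSemigroup.star_mul, star_idem hc]
    simp only [mul_assoc]
    rw [show c * (c * (f * s)) = c * (f * s) from by rw [← mul_assoc, hc]]
  rw [key]
  calc (star (f * s) * (c * (f * s))) * (star (f * s) * (f * s))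
      = star (f * s) * (c * ((f * s) * (star (f * s) * (f * s)))) := by
        simp only [mul_assoc]
    _ = star (f * s) * (c * (f * s)) := by rw [mul_star_self]

theorem ef_fe {e f : T} (he : e * e = e) (hf : f * f = f) :
    (e * f) * (f * e) = e * f := by
  calc (e * f) * (f * e) = e * ((f * f) * e) := by simp only [mul_assoc]
    _ = e * (f * e) := by rw [hf]
    _ = e * (e * f) := by rw [← idem_comm he hf]
    _ = (e * e) * f := by rw [mul_assoc]
    _ = e * f := by rw [he]

section Presheaf

variable (F : (CauchyCat T)ᵒᵖ ⥤ Type u)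

/-- The transition map of `F` along the morphism `f ⟶ e` of value `s`. -/
def res {e f : CauchyCat T} (s : T) (h : e.1 * s * f.1 = s) :
    F.obj (op e) → F.obj (op f) :=
  F.map (Quiver.Hom.op (⟨s, h⟩ : f ⟶ e))

theorem res_congr {e f : CauchyCat T} {s s' : T} (hss : s = s')
    (h : e.1 * s * f.1 = s) (h' : e.1 * s' * f.1 = s') (x : F.obj (op e)) :
    res F s h x = res F s' h' x := by subst hss; rfl

theorem res_cond {e f g : CauchyCat T} {s₁ s₂ : T}
    (h₁ : e.1 * s₁ * f.1 = s₁) (h₂ : f.1 * s₂ * g.1 = s₂) :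
    e.1 * (s₁ * s₂) * g.1 = s₁ * s₂ := by
  have ha := idem_left_absorb e.2 h₁
  have hb := idem_right_absorb g.2 h₂
  calc e.1 * (s₁ * s₂) * g.1 = (e.1 * s₁) * (s₂ * g.1) := by simp only [mul_assoc]
    _ = s₁ * s₂ := by rw [ha, hb]

theorem res_res {e f g : CauchyCat T} {s₁ s₂ : T}
    (h₁ : e.1 * s₁ * f.1 = s₁) (h₂ : f.1 * s₂ * g.1 = s₂) (x : F.obj (op e)) :
    res F s₂ h₂ (res F s₁ h₁ x) = res F (s₁ * s₂) (res_cond h₁ h₂) x := by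
  show (F.map _ ≫ F.map _) x = F.map _ x
  rw [← F.map_comp]
  rfl

theorem res_id {e : CauchyCat T} (h : e.1 * e.1 * e.1 = e.1) (x : F.obj (op e)) :
    res F e.1 h x = x := by
  show F.map _ x = x
  have : (⟨e.1, h⟩ : e ⟶ e) = 𝟙 e := rfl
  rw [this, CategoryTheory.op_id, F.map_id]
  rfl

/-- Pairs `(e, x)` with `x ∈ F(e)`. -/
abbrev Pr := (e : CauchyCat T) × F.obj (op e)

/-- The action of `s` on a pair. -/
def pact (p : Pr F) (s : T) : Pr F :=
  ⟨tgt p.1 s, res F (p.1.1 * s) (tgt_cond p.1 s) p.2⟩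

/-- Two pairs are related if both are "pulled up" from a common pair. -/
def prel (p q : Pr F) : Prop :=
  ∃ (c : CauchyCat T) (h₁ : c.1 * c.1 * p.1.1 = c.1) (h₂ : c.1 * c.1 * q.1.1 = c.1)
    (w : F.obj (op c)), p.2 = res F c.1 h₁ w ∧ q.2 = res F c.1 h₂ w

theorem prel_pact {p q : Pr F} (h : prel F p q) (s : T) :
    prel F (pact F p s) (pact F q s) := by
  obtain ⟨c, h₁, h₂, w, hp, hq⟩ := h
  have hc₁ : c.1 * p.1.1 = c.1 := by have h := h₁; rwa [c.2] at h
  have hc₂ : c.1 * q.1.1 = c.1 := by have h := h₂; rwa [c.2] at h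
  have hv₁ : c.1 * (p.1.1 * s) = (c.1 * s) * (tgt c s).1 := by
    rw [← mul_assoc, hc₁]
    exact (mul_star_self (c.1 * s)).symm
  have hv₂ : c.1 * (q.1.1 * s) = (c.1 * s) * (tgt c s).1 := by
    rw [← mul_assoc, hc₂]
    exact (mul_star_self (c.1 * s)).symm
  have hle₁ : (tgt c s).1 * (tgt c s).1 * (tgt p.1 s).1 = (tgt c s).1 := by
    rw [(tgt c s).2]
    exact conj_le c.2 hc₁ s
  have hle₂ : (tgt c s).1 * (tgt c s).1 * (tgt q.1 s).1 = (tgt c s).1 := by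
    rw [(tgt c s).2]
    exact conj_le c.2 hc₂ s
  refine ⟨tgt c s, hle₁, hle₂, res F (c.1 * s) (tgt_cond c s) w, ?_, ?_⟩
  · show res F (p.1.1 * s) (tgt_cond p.1 s) p.2 = _
    rw [hp, res_res]
    erw [res_res]
    exact res_congr F hv₁ _ _ w
  · show res F (q.1.1 * s) (tgt_cond q.1 s) q.2 = _
    rw [hq, res_res]
    erw [res_res]
    exact res_congr F hv₂ _ _ w

theorem prel_actmul (p : Pr F) (s t : T) :
    prel F (pact F (pact F p s) t) (pact F p (s * t)) := by
  have hobj : (tgt (tgt p.1 s) t).1 = (tgt p.1 (s * t)).1 := tgt_tgt p.1 s t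
  have hval : (p.1.1 * s) * ((tgt p.1 s).1 * t)
      = (p.1.1 * (s * t)) * (tgt p.1 (s * t)).1 := by
    have l1 : (p.1.1 * s) * ((tgt p.1 s).1 * t) = (p.1.1 * s) * t := by
      rw [← mul_assoc]
      show p.1.1 * s * (star (p.1.1 * s) * (p.1.1 * s)) * t = _
      rw [mul_star_self]
    rw [l1, mul_assoc]
    exact (mul_star_self (p.1.1 * (s * t))).symm
  have hle₁ : (tgt p.1 (s * t)).1 * (tgt p.1 (s * t)).1 * (tgt (tgt p.1 s) t).1
      = (tgt p.1 (s * t)).1 := by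
    rw [(tgt p.1 (s * t)).2, ← hobj, hobj]
    exact (tgt p.1 (s * t)).2
  have hle₂ : (tgt p.1 (s * t)).1 * (tgt p.1 (s * t)).1 * (tgt p.1 (s * t)).1
      = (tgt p.1 (s * t)).1 := by
    rw [(tgt p.1 (s * t)).2, (tgt p.1 (s * t)).2]
  refine ⟨tgt p.1 (s * t), hle₁, hle₂,
    res F (p.1.1 * (s * t)) (tgt_cond p.1 (s * t)) p.2, ?_, ?_⟩
  · show res F ((tgt p.1 s).1 * t) (tgt_cond (tgt p.1 s) t)
        (res F (p.1.1 * s) (tgt_cond p.1 s) p.2) = _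
    rw [res_res]
    erw [res_res]
    exact res_congr F hval _ _ p.2
  · show res F (p.1.1 * (s * t)) (tgt_cond p.1 (s * t)) p.2 = _
    erw [res_res]
    exact res_congr F (mul_star_self (p.1.1 * (s * t))).symm _ _ p.2

/-- The unitary right `T`-set built from the presheaf `F`. -/
def XF : RSet T where
  carrier := Quot (prel F)
  act := fun x s =>
    Quot.lift (fun p => Quot.mk (prel F) (pact F p s))
      (fun _ _ h => Quot.sound (prel_pact F h s)) x
  act_mul := fun x s t => by
    induction x using Quot.ind with
    | _ p => exact Quot.sound (prel_actmul F p s t)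

theorem prel_nat (e e' : CauchyCat T) (t : T)
    (h₀ : e.1 * (e.1 * t) * e'.1 = e.1 * t) (x : F.obj (op e)) :
    prel F ⟨e', res F (e.1 * t) h₀ x⟩ (pact F ⟨e, x⟩ t) := by
  have hbe : (e.1 * t) * e'.1 = e.1 * t := by
    have h := h₀; rwa [idem_mul_left] at h
  have hb : (e.1 * t) * (tgt e t).1 = e.1 * t := mul_star_self (e.1 * t)
  have hle₁ : (tgt e t).1 * (tgt e t).1 * e'.1 = (tgt e t).1 := by
    rw [(tgt e t).2]
    show star (e.1 * t) * (e.1 * t) * e'.1 = _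
    rw [mul_assoc, hbe]
    rfl
  have hle₂ : (tgt e t).1 * (tgt e t).1 * (tgt e t).1 = (tgt e t).1 := by
    rw [(tgt e t).2, (tgt e t).2]
  refine ⟨tgt e t, hle₁, hle₂, res F (e.1 * t) (tgt_cond e t) x, ?_, ?_⟩
  · rw [res_res]
    exact res_congr F hb.symm _ _ x
  · show res F (e.1 * t) (tgt_cond e t) x = _
    erw [res_res]
    exact res_congr F hb.symm _ _ x

theorem XF_unitary : (XF F).Unitary := by
  intro x
  induction x using Quot.ind with
  | _ p =>
    refine ⟨Quot.mk _ p, p.1.1, ?_⟩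
    show Quot.mk _ (pact F p p.1.1) = Quot.mk _ p
    have h₀ : p.1.1 * (p.1.1 * p.1.1) * p.1.1 = p.1.1 * p.1.1 := by
      simp only [p.1.2]
    have h := prel_nat F p.1 p.1 p.1.1 h₀ p.2
    have hres : res F (p.1.1 * p.1.1) h₀ p.2 = p.2 :=
      (res_congr F p.1.2 h₀ (by simp only [p.1.2]) p.2).trans (res_id F _ p.2)
    rw [hres] at h
    exact (Quot.sound h).symm

theorem psi_cond (f e : CauchyCat T) : f.1 * (f.1 * e.1) * e.1 = f.1 * e.1 := by
  rw [idem_mul_left, mul_assoc, e.2]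

/-- The "restriction to `e`" retraction, a complete invariant. -/
def psi (e : CauchyCat T) : (XF F).carrier → F.obj (op e) :=
  Quot.lift (fun p => res F (p.1.1 * e.1) (psi_cond p.1 e) p.2) (by
    rintro p q ⟨c, h₁, h₂, w, hp, hq⟩
    have hc₁ : c.1 * p.1.1 = c.1 := by have h := h₁; rwa [c.2] at h
    have hc₂ : c.1 * q.1.1 = c.1 := by have h := h₂; rwa [c.2] at h
    have hv : c.1 * (p.1.1 * e.1) = c.1 * (q.1.1 * e.1) := by
      rw [← mul_assoc, hc₁, ← mul_assoc, hc₂]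
    show res F (p.1.1 * e.1) _ p.2 = res F (q.1.1 * e.1) _ q.2
    rw [hp, hq, res_res, res_res]
    exact res_congr F hv _ _ w)

theorem phi_fix (e : CauchyCat T) (x : F.obj (op e)) :
    (XF F).act (Quot.mk _ ⟨e, x⟩) e.1 = Quot.mk _ (⟨e, x⟩ : Pr F) := by
  have h₀ : e.1 * (e.1 * e.1) * e.1 = e.1 * e.1 := by simp only [e.2]
  have h := prel_nat F e e e.1 h₀ x
  have hres : res F (e.1 * e.1) h₀ x = x :=
    (res_congr F e.2 h₀ (by simp only [e.2]) x).trans (res_id F _ x)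
  rw [hres] at h
  exact (Quot.sound h).symm

theorem psi_phi (e : CauchyCat T) (x : F.obj (op e)) :
    psi F e (Quot.mk _ (⟨e, x⟩ : Pr F)) = x := by
  show res F (e.1 * e.1) (psi_cond e e) x = x
  exact (res_congr F e.2 _ (by simp only [e.2]) x).trans (res_id F _ x)

theorem phi_psi (e : CauchyCat T) :
    ∀ (c : (XF F).carrier), (XF F).act c e.1 = c →
      Quot.mk _ (⟨e, psi F e c⟩ : Pr F) = c := by
  intro c
  induction c using Quot.ind with
  | _ p =>
    intro hc
    have h := prel_nat F p.1 e e.1 (psi_cond p.1 e) p.2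
    calc Quot.mk _ (⟨e, psi F e (Quot.mk _ p)⟩ : Pr F)
        = Quot.mk _ (pact F p e.1) := Quot.sound h
      _ = Quot.mk _ p := hc

/-- The unitary `T`-set associated with `F`, as an object of `USet T`. -/
def YF : USet T := ⟨XF F, XF_unitary F⟩

/-- The natural isomorphism between `F` and the presheaf of its associated
unitary `T`-set. -/
def natIso : F ≅ (QFunctor T).obj (YF F) :=
  CategoryTheory.NatIso.ofComponents
    (fun e =>
      { hom := TypeCat.ofHom fun x =>
          (⟨Quot.mk _ (⟨e.unop, x⟩ : Pr F), phi_fix F e.unop x⟩ :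
            ((QFunctor T).obj (YF F)).obj e)
        inv := TypeCat.ofHom fun (c : ((QFunctor T).obj (YF F)).obj e) => psi F e.unop c.1
        hom_inv_id := by
          ext x
          exact psi_phi F e.unop x
        inv_hom_id := by
          ext c
          exact Subtype.ext (phi_psi F e.unop c.1 c.2) })
    (by
      intro a b f
      ext x
      apply Subtype.ext
      have hl := idem_left_absorb a.unop.2 f.unop.2
      have hr := idem_right_absorb b.unop.2 f.unop.2
      have h₀ : a.unop.1 * (a.unop.1 * f.unop.1) * b.unop.1 = a.unop.1 * f.unop.1 := by
        rw [idem_mul_left, hl]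
        exact hr
      have hres : F.map f x = res F (a.unop.1 * f.unop.1) h₀ x := by
        rw [show F.map f x = res F f.unop.1 f.unop.2 x from rfl]
        exact res_congr F hl.symm _ _ x
      show Quot.mk _ (⟨b.unop, F.map f x⟩ : Pr F) = _
      rw [hres]
      exact Quot.sound (prel_nat F a.unop b.unop f.unop.1 h₀ x)
)
end Presheaf


instance qEssSurj : (QFunctor T).EssSurj where
  mem_essImage F := ⟨YF F, ⟨(natIso F).symm⟩⟩

instance qFaithful : (QFunctor T).Faithful where
  map_injective := by
    intro X Y f g h
    have key : ∀ x : X.1.carrier, f.toFun x = g.toFun x := by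
      intro x
      obtain ⟨y, s, rfl⟩ := X.2 x
      have hfix : X.1.act (X.1.act y s) (star s * s) = X.1.act y s := by
        rw [X.1.act_mul, mul_star_self]
      exact congrArg (fun α =>
        (α.app (op ⟨star s * s, star_mul_self_idem s⟩)
          (⟨X.1.act y s, hfix⟩ : {x : X.1.carrier // X.1.act x (star s * s) = x})).1) h
    apply RSet.Hom.ext
    funext x
    exact key x

instance qFull : (QFunctor T).Full where
  map_surjective := by
    intro X Y α
    have hex : ∀ x : X.1.carrier, ∃ e : CauchyCat T, X.1.act x e.1 = x := by
      intro x
      obtain ⟨y, s, rfl⟩ := X.2 x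
      exact ⟨⟨star s * s, star_mul_self_idem s⟩, by rw [X.1.act_mul, mul_star_self]⟩
    choose supp hsupp using hex
    have nat_val : ∀ {e f : CauchyCat T} (s : T) (hs : f.1 * s * e.1 = s)
        (x : X.1.carrier) (hx : X.1.act x f.1 = x)
        (z : {y : X.1.carrier // X.1.act y e.1 = y}), z.1 = X.1.act x s →
        (α.app (op e) z : {y : Y.1.carrier // Y.1.act y e.1 = y}).1 = Y.1.act
          (α.app (op f) (⟨x, hx⟩ : {y : X.1.carrier // X.1.act y f.1 = y}) :
            {y : Y.1.carrier // Y.1.act y f.1 = y}).1 s := by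
      intro e f s hs x hx z hz
      have nat := CategoryTheory.NatTrans.naturality_apply α
        (Quiver.Hom.op (⟨s, hs⟩ : e ⟶ f)) ⟨x, hx⟩
      have harg : ((QFunctor T).obj X).map (Quiver.Hom.op (⟨s, hs⟩ : e ⟶ f)) ⟨x, hx⟩
          = z := by
        apply Subtype.ext
        exact hz.symm
      rw [harg] at nat
      exact congrArg Subtype.val nat
    have key : ∀ (x : X.1.carrier) (e f : CauchyCat T) (he : X.1.act x e.1 = x)
        (hf : X.1.act x f.1 = x),
        (α.app (op e) ⟨x, he⟩).1 = (α.app (op f) ⟨x, hf⟩).1 := by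
      intro x e f he hf
      have hxfe : X.1.act x (f.1 * e.1) = x := by rw [← X.1.act_mul, hf, he]
      have hxef : X.1.act x (e.1 * f.1) = x := by rw [← X.1.act_mul, he, hf]
      have h1 := nat_val (f.1 * e.1) (psi_cond f e) x hf ⟨x, he⟩ hxfe.symm
      have h2 := nat_val (e.1 * f.1) (psi_cond e f) x he ⟨x, hf⟩ hxef.symm
      rw [h2, Y.1.act_mul, ef_fe e.2 f.2] at h1
      rw [h2]
      exact h1
    refine ⟨⟨fun x => (α.app (op (supp x)) ⟨x, hsupp x⟩).1, ?_⟩, ?_⟩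
    · intro x s
      have hstep : ∀ t, X.1.act x ((supp x).1 * t) = X.1.act x t := by
        intro t
        have h : X.1.act (X.1.act x (supp x).1) t = X.1.act x t :=
          congrArg (fun z => X.1.act z t) (hsupp x)
        rwa [X.1.act_mul] at h
      have hval : (supp x).1 * (s * (tgt (supp x) s).1) = (supp x).1 * s := by
        rw [← mul_assoc]
        exact mul_star_self ((supp x).1 * s)
      have hfixs : X.1.act (X.1.act x s) (tgt (supp x) s).1 = X.1.act x s := by
        rw [X.1.act_mul, ← hstep (s * (tgt (supp x) s).1), hval, hstep s]
      show (α.app (op (supp (X.1.act x s))) ⟨X.1.act x s, hsupp _⟩).1 = _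
      rw [key (X.1.act x s) (supp _) (tgt (supp x) s) (hsupp _) hfixs]
      have h3 := nat_val ((supp x).1 * s) (tgt_cond (supp x) s) x (hsupp x)
        ⟨X.1.act x s, hfixs⟩ (hstep s).symm
      rw [h3]
      have hA : Y.1.act (α.app (op (supp x)) ⟨x, hsupp x⟩).1 (supp x).1
          = (α.app (op (supp x)) ⟨x, hsupp x⟩).1 := (α.app (op (supp x)) ⟨x, hsupp x⟩).2
      have h4 : Y.1.act (Y.1.act (α.app (op (supp x)) ⟨x, hsupp x⟩).1 (supp x).1) s
          = Y.1.act (α.app (op (supp x)) ⟨x, hsupp x⟩).1 s :=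
        congrArg (fun z => Y.1.act z s) hA
      rwa [Y.1.act_mul] at h4
    · apply CategoryTheory.NatTrans.ext
      funext e
      ext z
      apply Subtype.ext
      exact key z.1 (supp z.1) e.unop (hsupp z.1) z.2

end QEquivAux

/-- For an inverse semigroup `S`, the functor `Q` is an equivalence between the
category of unitary right `S`-sets and the category of presheaves on the Cauchy
completion `C(S)`. -/
theorem qFunctor_isEquivalence_of_inverse : (QFunctor S).IsEquivalence := by
  exact ⟨QEquivAux.qFaithful, QEquivAux.qFull, QEquivAux.qEssSurj⟩
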